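/- If a finite game structure G does not have recurring certainty, then there exists an ultimately periodic (lasso-shaped) play of G, i.e., a play of the form ρ · σ^ω for finite segments ρ and σ, at which the grand coalition attains certainty at only finitely many prefixes. -/

import Mathlib

/-- The state reached after following the word `w` (a list of (action profile, state) pairs)
starting from state `v`: the last state of `w`, or `v` if `w` is empty. -/
def endFrom {α V : Type} : V → List (α × V) → V
  | v, [] => v
  | _, p :: w => endFrom p.2 w

/-- An `n`-player game structure with imperfect information: states `V` with an initial state,
action sets `A i` for each player, a total move relation labelled by action profiles,
observation functions `obs i : V → B i` for each player, and the observation function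
`obs0 : V → B0` of the fictitious, less informed Player 0, which is a coarsening of
every player's observation. -/
structure GameStructure (n : ℕ) (V : Type) (A : Fin n → Type) (B : Fin n → Type)
    (B0 : Type) where
  init : V
  move : V → (∀ i, A i) → V → Prop
  move_total : ∀ v a, ∃ v', move v a v'
  obs : ∀ i : Fin n, V → B i
  obs0 : V → B0
  obs0_coarse : ∀ v v' : V, (∃ i, obs i v = obs i v') → obs0 v = obs0 v'

namespace GameStructure

variable {n : ℕ} {V : Type} {A : Fin n → Type} {B : Fin n → Type} {B0 : Type}

variable (G : GameStructure n V A B B0)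

/-- `G.IsHistFrom v w` holds if the word `w` describes a sequence of legal moves from `v`. -/
def IsHistFrom : V → List ((∀ i, A i) × V) → Prop
  | _, [] => True
  | v, p :: w => G.move v p.1 p.2 ∧ IsHistFrom p.2 w

/-- `w` encodes a history: a legal sequence of moves from the initial state.
The history `v₀ a₀ v₁ … a_{ℓ-1} v_ℓ` is encoded as the word `(a₀,v₁) … (a_{ℓ-1},v_ℓ)`. -/
def IsHistWord (w : List ((∀ i, A i) × V)) : Prop := G.IsHistFrom G.init w

/-- The final state of the history encoded by `w`. -/
def endState (w : List ((∀ i, A i) × V)) : V := endFrom G.init w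

/-- The sequence of Player 0's observations of the states of the history encoded by `w`
(the observation of the initial state is omitted, as it is fixed). Two histories are
`∼⁰`-indistinguishable iff their `obs0Trace`s are equal (which forces equal length). -/
def obs0Trace (w : List ((∀ i, A i) × V)) : List B0 := w.map fun p => G.obs0 p.2

/-- The grand coalition attains certainty at the history `w`: every history
`∼⁰`-indistinguishable from `w` ends at the same state. -/
def Certain (w : List ((∀ i, A i) × V)) : Prop :=
  ∀ w', G.IsHistWord w' → G.obs0Trace w' = G.obs0Trace w → G.endState w' = G.endState w

/-- A play: an infinite legal sequence of states and action profiles from the initial state. -/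
structure Play (G : GameStructure n V A B B0) where
  st : ℕ → V
  act : ℕ → ∀ i, A i
  init_eq : st 0 = G.init
  valid : ∀ k, G.move (st k) (act k) (st (k + 1))

/-- The word encoding the prefix history of length `ℓ` of the play `π`. -/
def Play.prefixWord {G : GameStructure n V A B B0} (π : G.Play) (ℓ : ℕ) :
    List ((∀ i, A i) × V) :=
  (List.range ℓ).map fun k => (π.act k, π.st (k + 1))

/-- The play `π` has recurring certainty: the grand coalition attains certainty at
infinitely many of its finite prefixes. -/
def Play.HasRecurringCertainty {G : GameStructure n V A B B0} (π : G.Play) : Prop :=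
  ∀ m : ℕ, ∃ ℓ, m ≤ ℓ ∧ G.Certain (π.prefixWord ℓ)

/-- The game structure `G` has recurring certainty: every play does. -/
def RecurringCertainty : Prop := ∀ π : G.Play, π.HasRecurringCertainty

/-- `G` has periodic certainty with bound `t`: along every play, every prefix history can be
extended by at most `t` further rounds, within the play, to a history at which the grand
coalition attains certainty. -/
def PeriodicWithBound (t : ℕ) : Prop :=
  ∀ π : G.Play, ∀ m : ℕ, ∃ ℓ, m ≤ ℓ ∧ ℓ ≤ m + t ∧ G.Certain (π.prefixWord ℓ)

/-- `G` has periodic certainty: periodic certainty with some uniform bound `t`. -/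
def PeriodicCertainty : Prop := ∃ t, G.PeriodicWithBound t

end GameStructure

/-- The `k`-th letter of the play `π`, viewed as the infinite word
`(a₀,v₁)(a₁,v₂)…` over the alphabet `A × V`. -/
def GameStructure.Play.letter {n : ℕ} {V : Type} {A : Fin n → Type} {B : Fin n → Type}
    {B0 : Type} {G : GameStructure n V A B B0} (π : G.Play) (k : ℕ) : (∀ i, A i) × V :=
  (π.act k, π.st (k + 1))

section Helpers

theorem endFrom_append {α V : Type} (v : V) (w w' : List (α × V)) :
    endFrom v (w ++ w') = endFrom (endFrom v w) w' := by
  induction w generalizing v with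
  | nil => rfl
  | cons p w ih => simpa [endFrom] using ih p.2

namespace GameStructure

variable {n : ℕ} {V : Type} {A : Fin n → Type} {B : Fin n → Type} {B0 : Type}
variable (G : GameStructure n V A B B0)

theorem isHistFrom_append (v : V) (w : List ((∀ i, A i) × V)) (p : (∀ i, A i) × V) :
    G.IsHistFrom v (w ++ [p]) ↔ G.IsHistFrom v w ∧ G.move (endFrom v w) p.1 p.2 := by
  induction w generalizing v with
  | nil => simp [IsHistFrom, endFrom]
  | cons q w ih => simp [IsHistFrom, endFrom, ih]; tauto

theorem obs0Trace_append (w w' : List ((∀ i, A i) × V)) :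
    G.obs0Trace (w ++ w') = G.obs0Trace w ++ G.obs0Trace w' := by
  simp [obs0Trace]

theorem Play.prefixWord_succ (π : G.Play) (ℓ : ℕ) :
    π.prefixWord (ℓ + 1) = π.prefixWord ℓ ++ [(π.act ℓ, π.st (ℓ + 1))] := by
  simp [Play.prefixWord, List.range_succ]

theorem endState_prefixWord (π : G.Play) (ℓ : ℕ) :
    G.endState (π.prefixWord ℓ) = π.st ℓ := by
  induction ℓ with
  | zero => simpa [endState, Play.prefixWord, endFrom] using π.init_eq.symm
  | succ ℓ ih =>
    rw [Play.prefixWord_succ, endState, endFrom_append]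
    rfl

theorem isHistWord_prefixWord (π : G.Play) (ℓ : ℕ) :
    G.IsHistWord (π.prefixWord ℓ) := by
  induction ℓ with
  | zero => simp [IsHistWord, Play.prefixWord, IsHistFrom]
  | succ ℓ ih =>
    rw [Play.prefixWord_succ, IsHistWord, isHistFrom_append]
    exact ⟨ih, by
      have := G.endState_prefixWord π ℓ
      rw [endState] at this
      rw [this]; exact π.valid ℓ⟩

/-- The knowledge set associated to an observation trace. -/
def Know (t : List B0) : Set V :=
  {v | ∃ w, G.IsHistWord w ∧ G.obs0Trace w = t ∧ G.endState w = v}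

theorem mem_know_append {t : List B0} {b : B0} {v' : V} :
    v' ∈ G.Know (t ++ [b]) ↔
      ∃ v ∈ G.Know t, ∃ a, G.move v a v' ∧ G.obs0 v' = b := by
  constructor
  · rintro ⟨w, hw, htr, hend⟩
    rcases List.eq_nil_or_concat w with rfl | ⟨w₀, p, rfl⟩
    · exact absurd (congrArg List.length htr) (by simp [obs0Trace])
    · rw [List.concat_eq_append] at hw htr hend
      rw [G.obs0Trace_append] at htr
      obtain ⟨htr₀, hb⟩ := List.append_inj' htr rfl
      rw [IsHistWord, isHistFrom_append] at hw
      refine ⟨endFrom G.init w₀, ⟨w₀, hw.1, htr₀, rfl⟩, p.1, ?_, ?_⟩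
      · have : G.endState (w₀ ++ [p]) = p.2 := by
          rw [endState, endFrom_append]; rfl
        rw [← hend, this] at *
        exact hw.2
      · rw [← hend]
        have : G.endState (w₀ ++ [p]) = p.2 := by
          rw [endState, endFrom_append]; rfl
        rw [this]
        simpa [obs0Trace] using hb
  · rintro ⟨v, ⟨w, hw, htr, hend⟩, a, hmv, hb⟩
    refine ⟨w ++ [(a, v')], ?_, ?_, ?_⟩
    · rw [IsHistWord, isHistFrom_append]
      exact ⟨hw, by rw [show endFrom G.init w = v from hend]; exact hmv⟩
    · rw [G.obs0Trace_append, htr]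
      simp [obs0Trace, hb]
    · rw [endState, endFrom_append]; rfl

theorem know_congr {t₁ t₂ : List B0} (h : G.Know t₁ = G.Know t₂) (b : B0) :
    G.Know (t₁ ++ [b]) = G.Know (t₂ ++ [b]) := by
  ext v'
  rw [mem_know_append, mem_know_append, h]

end GameStructure

/-- Index map for pumping the segment `[ℓ₁, ℓ₂)` of a play. -/
def pumpIdx (ℓ₁ ℓ₂ ℓ : ℕ) : ℕ :=
  if ℓ < ℓ₂ then ℓ else ℓ₁ + (ℓ - ℓ₁) % (ℓ₂ - ℓ₁)

theorem pumpIdx_of_lt {ℓ₁ ℓ₂ ℓ : ℕ} (h : ℓ < ℓ₂) : pumpIdx ℓ₁ ℓ₂ ℓ = ℓ := if_pos h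

theorem pumpIdx_of_ge {ℓ₁ ℓ₂ ℓ : ℕ} (h : ℓ₂ ≤ ℓ) :
    pumpIdx ℓ₁ ℓ₂ ℓ = ℓ₁ + (ℓ - ℓ₁) % (ℓ₂ - ℓ₁) := if_neg (by omega)

theorem pumpIdx_period {ℓ₁ ℓ₂ : ℕ} (h12 : ℓ₁ < ℓ₂) {ℓ : ℕ} (hℓ : ℓ₁ ≤ ℓ) :
    pumpIdx ℓ₁ ℓ₂ (ℓ + (ℓ₂ - ℓ₁)) = pumpIdx ℓ₁ ℓ₂ ℓ := by
  rw [pumpIdx_of_ge (by omega)]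
  rw [show ℓ + (ℓ₂ - ℓ₁) - ℓ₁ = (ℓ - ℓ₁) + (ℓ₂ - ℓ₁) from by omega, Nat.add_mod_right]
  rcases Nat.lt_or_ge ℓ ℓ₂ with hc | hc
  · rw [pumpIdx_of_lt hc, Nat.mod_eq_of_lt (by omega)]
    omega
  · rw [pumpIdx_of_ge hc]

theorem pumpIdx_succ_cases {ℓ₁ ℓ₂ ℓ : ℕ} (h12 : ℓ₁ < ℓ₂) :
    pumpIdx ℓ₁ ℓ₂ (ℓ + 1) = pumpIdx ℓ₁ ℓ₂ ℓ + 1 ∨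
      (pumpIdx ℓ₁ ℓ₂ (ℓ + 1) = ℓ₁ ∧ pumpIdx ℓ₁ ℓ₂ ℓ + 1 = ℓ₂) := by
  rcases lt_trichotomy (ℓ + 1) ℓ₂ with h | h | h
  · left; rw [pumpIdx_of_lt h, pumpIdx_of_lt (by omega)]
  · right
    rw [pumpIdx_of_ge (by omega), pumpIdx_of_lt (by omega)]
    rw [show ℓ + 1 - ℓ₁ = ℓ₂ - ℓ₁ from by omega, Nat.mod_self]
    omega
  · have hℓ : ℓ₂ ≤ ℓ := by omega
    rw [pumpIdx_of_ge (by omega), pumpIdx_of_ge hℓ]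
    have hdm := Nat.div_add_mod (ℓ - ℓ₁) (ℓ₂ - ℓ₁)
    have hr : (ℓ - ℓ₁) % (ℓ₂ - ℓ₁) < ℓ₂ - ℓ₁ := Nat.mod_lt _ (by omega)
    have h1 : (ℓ + 1 - ℓ₁) % (ℓ₂ - ℓ₁) = ((ℓ - ℓ₁) % (ℓ₂ - ℓ₁) + 1) % (ℓ₂ - ℓ₁) := by
      rw [show ℓ + 1 - ℓ₁ = (ℓ₂ - ℓ₁) * ((ℓ - ℓ₁) / (ℓ₂ - ℓ₁)) + ((ℓ - ℓ₁) % (ℓ₂ - ℓ₁) + 1)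
        from by omega, Nat.mul_add_mod]
    rcases Nat.lt_or_ge ((ℓ - ℓ₁) % (ℓ₂ - ℓ₁) + 1) (ℓ₂ - ℓ₁) with hc | hc
    · left; rw [h1, Nat.mod_eq_of_lt hc]; omega
    · right
      have hc' : (ℓ - ℓ₁) % (ℓ₂ - ℓ₁) + 1 = ℓ₂ - ℓ₁ := by omega
      rw [h1, hc', Nat.mod_self]
      omega

theorem pumpIdx_st_succ {n : ℕ} {V : Type} {A : Fin n → Type} {B : Fin n → Type} {B0 : Type}
    {G : GameStructure n V A B B0} (π : G.Play) {ℓ₁ ℓ₂ : ℕ} (h12 : ℓ₁ < ℓ₂)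
    (hst : π.st ℓ₁ = π.st ℓ₂) (ℓ : ℕ) :
    π.st (pumpIdx ℓ₁ ℓ₂ (ℓ + 1)) = π.st (pumpIdx ℓ₁ ℓ₂ ℓ + 1) := by
  rcases pumpIdx_succ_cases (ℓ := ℓ) h12 with h | ⟨h1, h2⟩
  · rw [h]
  · rw [h1, h2, hst]
namespace GameStructure

variable {n : ℕ} {V : Type} {A : Fin n → Type} {B : Fin n → Type} {B0 : Type}
variable {G : GameStructure n V A B B0}

/-- The pumped play repeating the segment `[ℓ₁, ℓ₂)` of `π` forever. -/
def Play.pump (π : G.Play) (ℓ₁ ℓ₂ : ℕ) (h12 : ℓ₁ < ℓ₂) (hst : π.st ℓ₁ = π.st ℓ₂) :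
    G.Play where
  st ℓ := π.st (pumpIdx ℓ₁ ℓ₂ ℓ)
  act ℓ := π.act (pumpIdx ℓ₁ ℓ₂ ℓ)
  init_eq := by
    show π.st (pumpIdx ℓ₁ ℓ₂ 0) = G.init
    rw [pumpIdx_of_lt (show 0 < ℓ₂ by omega)]; exact π.init_eq
  valid k := by
    show G.move (π.st (pumpIdx ℓ₁ ℓ₂ k)) (π.act (pumpIdx ℓ₁ ℓ₂ k)) (π.st (pumpIdx ℓ₁ ℓ₂ (k + 1)))
    rw [pumpIdx_st_succ π h12 hst k]
    exact π.valid _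

theorem Play.pump_st (π : G.Play) {ℓ₁ ℓ₂ : ℕ} (h12 : ℓ₁ < ℓ₂) (hst : π.st ℓ₁ = π.st ℓ₂)
    (ℓ : ℕ) : (π.pump ℓ₁ ℓ₂ h12 hst).st ℓ = π.st (pumpIdx ℓ₁ ℓ₂ ℓ) := rfl

theorem Play.pump_letter (π : G.Play) {ℓ₁ ℓ₂ : ℕ} (h12 : ℓ₁ < ℓ₂) (hst : π.st ℓ₁ = π.st ℓ₂)
    (ℓ : ℕ) : (π.pump ℓ₁ ℓ₂ h12 hst).letter ℓ = π.letter (pumpIdx ℓ₁ ℓ₂ ℓ) := by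
  show (π.act (pumpIdx ℓ₁ ℓ₂ ℓ), π.st (pumpIdx ℓ₁ ℓ₂ (ℓ + 1))) =
    (π.act (pumpIdx ℓ₁ ℓ₂ ℓ), π.st (pumpIdx ℓ₁ ℓ₂ ℓ + 1))
  rw [pumpIdx_st_succ π h12 hst]

theorem Play.pump_prefixWord (π : G.Play) {ℓ₁ ℓ₂ : ℕ} (h12 : ℓ₁ < ℓ₂)
    (hst : π.st ℓ₁ = π.st ℓ₂) {ℓ : ℕ} (hℓ : ℓ ≤ ℓ₂) :
    (π.pump ℓ₁ ℓ₂ h12 hst).prefixWord ℓ = π.prefixWord ℓ := by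
  unfold Play.prefixWord
  apply List.map_congr_left
  intro j hj
  rw [List.mem_range] at hj
  have hj2 : j < ℓ₂ := by omega
  show (π.act (pumpIdx ℓ₁ ℓ₂ j), π.st (pumpIdx ℓ₁ ℓ₂ (j + 1))) = _
  rw [pumpIdx_st_succ π h12 hst, pumpIdx_of_lt hj2]

theorem Play.obs0Trace_prefixWord_succ (π : G.Play) (ℓ : ℕ) :
    G.obs0Trace (π.prefixWord (ℓ + 1)) =
      G.obs0Trace (π.prefixWord ℓ) ++ [G.obs0 (π.st (ℓ + 1))] := by
  rw [Play.prefixWord_succ G π ℓ, G.obs0Trace_append]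
  rfl

end GameStructure
/-- If a finite game structure does not have recurring certainty, then there is an ultimately
periodic (lasso-shaped) play — one whose infinite word over `A × V` has the form `ρ · σ^ω` —
at which the grand coalition attains certainty at only finitely many prefixes. -/
theorem exists_lasso_play_of_not_recurringCertainty
    {n : ℕ} {V : Type} {A : Fin n → Type} {B : Fin n → Type} {B0 : Type}
    (hn : 1 ≤ n) [Fintype V] [∀ i, Fintype (A i)] [∀ i, Nonempty (A i)]
    [∀ i, Fintype (B i)] [Fintype B0]
    (G : GameStructure n V A B B0)
    (h : ¬ G.RecurringCertainty) :
    ∃ π : G.Play,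
      (∃ (m k : ℕ), 0 < k ∧ ∀ ℓ, m ≤ ℓ → π.letter (ℓ + k) = π.letter ℓ) ∧
      (∃ m : ℕ, ∀ ℓ, m ≤ ℓ → ¬ G.Certain (π.prefixWord ℓ)) := by
  rw [GameStructure.RecurringCertainty] at h
  push_neg at h
  obtain ⟨π, hπ⟩ := h
  rw [GameStructure.Play.HasRecurringCertainty] at hπ
  push_neg at hπ
  obtain ⟨m, hm⟩ := hπ
  classical
  -- pigeonhole on (state, knowledge set)
  let f : ℕ → V × Set V := fun ℓ => (π.st ℓ, G.Know (G.obs0Trace (π.prefixWord ℓ)))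
  obtain ⟨x, y, hxy, hfxy⟩ := Finite.exists_ne_map_eq_of_infinite (fun j : ℕ => f (m + j))
  have key : ∃ ℓ₁ ℓ₂, m ≤ ℓ₁ ∧ ℓ₁ < ℓ₂ ∧ f ℓ₁ = f ℓ₂ := by
    rcases Nat.lt_or_gt_of_ne hxy with h' | h'
    · exact ⟨m + x, m + y, by omega, by omega, hfxy⟩
    · exact ⟨m + y, m + x, by omega, by omega, hfxy.symm⟩
  obtain ⟨ℓ₁, ℓ₂, hm1, h12, hfe⟩ := key
  have hst : π.st ℓ₁ = π.st ℓ₂ := congrArg Prod.fst hfe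
  have hkn : G.Know (G.obs0Trace (π.prefixWord ℓ₁)) =
      G.Know (G.obs0Trace (π.prefixWord ℓ₂)) := congrArg Prod.snd hfe
  let π' := π.pump ℓ₁ ℓ₂ h12 hst
  -- periodicity of states of π'
  have hst'per : ∀ ℓ, ℓ₁ ≤ ℓ → π'.st (ℓ + (ℓ₂ - ℓ₁)) = π'.st ℓ := by
    intro ℓ hℓ
    show π.st (pumpIdx ℓ₁ ℓ₂ (ℓ + (ℓ₂ - ℓ₁))) = π.st (pumpIdx ℓ₁ ℓ₂ ℓ)
    rw [pumpIdx_period h12 hℓ]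
  -- periodicity of the knowledge sets along π'
  have hKper : ∀ ℓ, ℓ₁ ≤ ℓ →
      G.Know (G.obs0Trace (π'.prefixWord (ℓ + (ℓ₂ - ℓ₁)))) =
        G.Know (G.obs0Trace (π'.prefixWord ℓ)) := by
    intro ℓ hℓ
    induction ℓ, hℓ using Nat.le_induction with
    | base =>
      rw [show ℓ₁ + (ℓ₂ - ℓ₁) = ℓ₂ from by omega,
        π.pump_prefixWord h12 hst (le_refl ℓ₂), π.pump_prefixWord h12 hst (le_of_lt h12)]
      exact hkn.symm
    | succ ℓ hℓ ih =>
      rw [show ℓ + 1 + (ℓ₂ - ℓ₁) = (ℓ + (ℓ₂ - ℓ₁)) + 1 from by omega,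
        π'.obs0Trace_prefixWord_succ, π'.obs0Trace_prefixWord_succ,
        show ℓ + (ℓ₂ - ℓ₁) + 1 = (ℓ + 1) + (ℓ₂ - ℓ₁) from by omega,
        hst'per (ℓ + 1) (by omega)]
      exact G.know_congr ih _
  -- persistent uncertainty along π'
  have hUnc : ∀ ℓ, ℓ₁ ≤ ℓ →
      ∃ v ∈ G.Know (G.obs0Trace (π'.prefixWord ℓ)), v ≠ π'.st ℓ := by
    intro ℓ
    induction ℓ using Nat.strong_induction_on with
    | _ ℓ ih =>
      intro hℓ
      rcases Nat.lt_or_ge ℓ (ℓ₂ + 1) with hle | hgt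
      · -- base zone: ℓ₁ ≤ ℓ ≤ ℓ₂
        have hle' : ℓ ≤ ℓ₂ := by omega
        have hpre : π'.prefixWord ℓ = π.prefixWord ℓ := π.pump_prefixWord h12 hst hle'
        have hst'' : π'.st ℓ = π.st ℓ := by
          show π.st (pumpIdx ℓ₁ ℓ₂ ℓ) = π.st ℓ
          rcases Nat.lt_or_ge ℓ ℓ₂ with h' | h'
          · rw [pumpIdx_of_lt h']
          · have hq : ℓ = ℓ₂ := by omega
            subst hq
            rw [pumpIdx_of_ge le_rfl, Nat.mod_self, Nat.add_zero]
            exact hst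
        rw [hpre, hst'']
        have hnc := hm ℓ (by omega)
        rw [GameStructure.Certain] at hnc
        push_neg at hnc
        obtain ⟨w', hw', htr, hend⟩ := hnc
        refine ⟨G.endState w', ⟨w', hw', htr, rfl⟩, ?_⟩
        rw [G.endState_prefixWord π ℓ] at hend
        exact hend
      · -- periodic zone
        obtain ⟨j, rfl⟩ : ∃ j, ℓ = (ℓ₁ + 1 + j) + (ℓ₂ - ℓ₁) := ⟨ℓ - ℓ₂ - 1, by omega⟩
        have h' : ℓ₁ ≤ ℓ₁ + 1 + j := by omega
        obtain ⟨v, hv, hvne⟩ := ih (ℓ₁ + 1 + j) (by omega) (by omega)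
        refine ⟨v, ?_, ?_⟩
        · rw [hKper _ h']; exact hv
        · rw [hst'per _ h']; exact hvne
  refine ⟨π', ⟨ℓ₁, ℓ₂ - ℓ₁, by omega, ?_⟩, ℓ₁, ?_⟩
  · intro ℓ hℓ
    show π'.letter (ℓ + (ℓ₂ - ℓ₁)) = π'.letter ℓ
    rw [π.pump_letter h12 hst, π.pump_letter h12 hst, pumpIdx_period h12 hℓ]
  · intro ℓ hℓ hc
    obtain ⟨v, ⟨w', hw', htr, hend⟩, hvne⟩ := hUnc ℓ hℓ
    have hend' := hc w' hw' htr
    rw [G.endState_prefixWord π' ℓ] at hend'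
    exact hvne (by rw [← hend]; exact hend')
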